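/- Lemma 4.3(iii) (monotone decrease of successive differences for the relaxed G-FBS iteration): Let (x_k) and (x̃_k) be sequences in H satisfying, for every k ∈ ℕ, Q x_k − B x_k − Q x̃_k ∈ A x̃_k and x_{k+1} = x_k + M(x̃_k − x_k). Then for every k ∈ ℕ, ‖x_k − x_{k+1}‖_S² − ‖x_{k+1} − x_{k+2}‖_S² ≥ ‖(x_k − x̃_k) − (x_{k+1} − x̃_{k+1})‖_G². -/

import Mathlib

open RealInnerProductSpace

private lemma cs_psd {H : Type*} [NormedAddCommGroup H] [InnerProductSpace ℝ H]
    (T : H →L[ℝ] H) (hsym : ∀ x y : H, ⟪T x, y⟫ = ⟪x, T y⟫)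
    (hpos : ∀ x : H, 0 ≤ ⟪T x, x⟫) (x y : H) :
    ⟪T x, y⟫ ^ 2 ≤ ⟪T x, x⟫ * ⟪T y, y⟫ := by
  have h1 : ⟪T y, x⟫ = ⟪T x, y⟫ := by rw [hsym, real_inner_comm]
  have key : ∀ t : ℝ, 0 ≤ ⟪T y, y⟫ * (t * t) + (2 * ⟪T x, y⟫) * t + ⟪T x, x⟫ := by
    intro t
    have h := hpos (x + t • y)
    have expand : ⟪T (x + t • y), x + t • y⟫
        = ⟪T y, y⟫ * (t * t) + (2 * ⟪T x, y⟫) * t + ⟪T x, x⟫ := by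
      simp only [map_add, map_smul, inner_add_left, inner_add_right,
        real_inner_smul_left, real_inner_smul_right]
      linear_combination t * h1
    linarith [expand ▸ h]
  have hd := discrim_le_zero key
  rw [discrim] at hd
  nlinarith [hd]


open RealInnerProductSpace

set_option maxHeartbeats 1600000 in
/-- Lemma 4.3(iii): monotone decrease of successive differences for the relaxed
G-FBS iteration with relaxation operator `M`. -/
theorem stmt_8
    {H : Type*} [NormedAddCommGroup H] [InnerProductSpace ℝ H] [CompleteSpace H]
    (Q : H →L[ℝ] H)
    (Qt : H →L[ℝ] H) (hQt : Qt = (1 / 2 : ℝ) • (Q + ContinuousLinearMap.adjoint Q))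
    (hQtpos : ∀ x : H, 0 ≤ ⟪Qt x, x⟫)
    (ν : ℝ) (hν : 0 < ν)
    (hνQ : ∀ w ∈ (LinearMap.ker (Qt : H →ₗ[ℝ] H))ᗮ, ν * ‖w‖ ≤ ‖Qt w‖)
    (M : H ≃L[ℝ] H)
    (β : ℝ) (hβ : 0 ≤ β)
    (B : H → H)
    (hB : ∀ x y : H, ‖B x - B y‖ ^ 2 ≤ β * ⟪B x - B y, x - y⟫)
    (hranB : Set.range B ⊆ Set.range Qt)
    (S : H →L[ℝ] H) (hS : S = Q ∘L (M.symm : H →L[ℝ] H))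
    (hSsym : ∀ x y : H, ⟪S x, y⟫ = ⟪x, S y⟫)
    (hSpos : ∀ x : H, 0 ≤ ⟪S x, x⟫)
    (G : H →L[ℝ] H)
    (hG : G = (1 - β / (4 * ν)) • (Q + ContinuousLinearMap.adjoint Q) -
      (ContinuousLinearMap.adjoint (M : H →L[ℝ] H)) ∘L Q)
    (hGsym : ∀ x y : H, ⟪G x, y⟫ = ⟪x, G y⟫)
    (hGpos : ∀ x : H, 0 ≤ ⟪G x, x⟫)
    (A : H → Set H)
    (hA : ∀ x y u v : H, u ∈ A x → v ∈ A y → 0 ≤ ⟪u - v, x - y⟫)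
    (x xt : ℕ → H)
    (hxt : ∀ k : ℕ, Q (x k) - B (x k) - Q (xt k) ∈ A (xt k))
    (hstep : ∀ k : ℕ, x (k + 1) = x k + M (xt k - x k)) :
    ∀ k : ℕ,
      ⟪G ((x k - xt k) - (x (k + 1) - xt (k + 1))),
          (x k - xt k) - (x (k + 1) - xt (k + 1))⟫ ≤
        ⟪S (x k - x (k + 1)), x k - x (k + 1)⟫ -
          ⟪S (x (k + 1) - x (k + 2)), x (k + 1) - x (k + 2)⟫ := by
  intro k
  set a : H := x k - xt k with ha
  set b : H := x (k + 1) - xt (k + 1) with hb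
  set v : H := a - b with hv
  set Bd : H := B (x k) - B (x (k + 1)) with hBd
  clear_value a b v Bd
  -- step relations
  have hMa : M a = x k - x (k + 1) := by
    rw [ha, map_sub, hstep k, map_sub]; abel
  have hMb : M b = x (k + 1) - x (k + 2) := by
    rw [hb, map_sub, hstep (k + 1), map_sub]; abel
  -- S-related facts
  have hSM : ∀ u : H, S (M u) = Q u := by
    intro u; rw [hS]; simp
  have hSd : ⟪S (x k - x (k + 1)), x k - x (k + 1)⟫ = ⟪Q a, M a⟫ := by
    rw [← hMa, hSM]
  have hSd' : ⟪S (x (k + 1) - x (k + 2)), x (k + 1) - x (k + 2)⟫ = ⟪Q b, M b⟫ := by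
    rw [← hMb, hSM]
  have hsym_ab : ⟪Q b, M a⟫ = ⟪Q a, M b⟫ := by
    have h := hSsym (M a) (M b)
    rw [hSM, hSM] at h
    linarith [h, real_inner_comm (M a) (Q b)]
  -- Qt facts
  have hQtsym : ∀ u w : H, ⟪Qt u, w⟫ = ⟪u, Qt w⟫ := by
    intro u w
    rw [hQt]
    simp only [ContinuousLinearMap.smul_apply, ContinuousLinearMap.add_apply,
      real_inner_smul_left, real_inner_smul_right, inner_add_left, inner_add_right,
      ContinuousLinearMap.adjoint_inner_left, ContinuousLinearMap.adjoint_inner_right]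
    ring
  have hQtv : ⟪Qt v, v⟫ = ⟪Q v, v⟫ := by
    rw [hQt]
    simp only [ContinuousLinearMap.smul_apply, ContinuousLinearMap.add_apply,
      real_inner_smul_left, inner_add_left, ContinuousLinearMap.adjoint_inner_left]
    rw [real_inner_comm v (Q v)]; ring
  -- G expansion
  have hGv : ⟪G v, v⟫ = 2 * (1 - β / (4 * ν)) * ⟪Q v, v⟫ - ⟪Q v, M v⟫ := by
    rw [hG]
    simp only [ContinuousLinearMap.sub_apply, ContinuousLinearMap.smul_apply,
      ContinuousLinearMap.add_apply, ContinuousLinearMap.comp_apply,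
      ContinuousLinearMap.coe_coe, ContinuousLinearEquiv.coe_coe, inner_sub_left,
      inner_add_left, real_inner_smul_left, ContinuousLinearMap.adjoint_inner_left]
    rw [real_inner_comm v (Q v)]; ring
  -- bilinear expansions
  have hexp1 : ⟪Q v, M v⟫ = ⟪Q a, M a⟫ - 2 * ⟪Q a, M b⟫ + ⟪Q b, M b⟫ := by
    simp only [hv, map_sub, inner_sub_left, inner_sub_right]
    linarith [hsym_ab]
  have hexp2 : ⟪Q v, M a⟫ = ⟪Q a, M a⟫ - ⟪Q a, M b⟫ := by
    simp only [hv, map_sub, inner_sub_left, inner_sub_right]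
    linarith [hsym_ab]
  -- monotonicity of A
  have hMono : 0 ≤ ⟪Q v, M a⟫ - ⟪Q v, v⟫ - ⟪Bd, M a⟫ + ⟪Bd, v⟫ := by
    have h := hA (xt k) (xt (k + 1)) _ _ (hxt k) (hxt (k + 1))
    have e1 : (Q (x k) - B (x k) - Q (xt k)) - (Q (x (k + 1)) - B (x (k + 1)) - Q (xt (k + 1)))
        = Q v - Bd := by
      rw [hBd, hv, ha, hb, map_sub, map_sub, map_sub]; abel
    have e2 : xt k - xt (k + 1) = M a - v := by
      rw [hMa, hv, ha, hb]; abel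
    rw [e1, e2, inner_sub_left, inner_sub_right, inner_sub_right] at h
    linarith
  -- cocoercivity + range estimate
  have hcoco : ⟪Bd, v⟫ ≤ ⟪Bd, M a⟫ + β / (4 * ν) * ⟪Q v, v⟫ := by
    obtain ⟨p1, hp1⟩ := hranB ⟨x k, rfl⟩
    obtain ⟨p2, hp2⟩ := hranB ⟨x (k + 1), rfl⟩
    set p : H := p1 - p2 with hp
    clear_value p  -- keep hp
    have hQtp : Qt p = Bd := by rw [hp, map_sub, hp1, hp2, hBd]
    have hcl : IsClosed ((LinearMap.ker (Qt : H →ₗ[ℝ] H) : Submodule ℝ H) : Set H) :=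
      ContinuousLinearMap.isClosed_ker Qt
    haveI : CompleteSpace (LinearMap.ker (Qt : H →ₗ[ℝ] H) : Submodule ℝ H) := hcl.completeSpace_coe
    obtain ⟨p0, hp0, p1', hp1', hpeq⟩ :=
      (LinearMap.ker (Qt : H →ₗ[ℝ] H) : Submodule ℝ H).exists_add_mem_mem_orthogonal p
    have hQt0 : Qt p0 = 0 := hp0
    have h1 : ⟪Qt p, p⟫ = ⟪Qt p1', p1'⟫ := by
      have hinz : ⟪Qt p1', p0⟫ = 0 := by rw [hQtsym, hQt0, inner_zero_right]
      rw [hpeq, map_add, hQt0, zero_add, inner_add_right, hinz, zero_add]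
    have hQteq : Qt p = Qt p1' := by rw [hpeq, map_add, hQt0, zero_add]
    have h2 : ν * ⟪Qt p, p⟫ ≤ ‖Bd‖ ^ 2 := by
      rw [h1, ← hQtp, hQteq]
      have hb1 : ⟪Qt p1', p1'⟫ ≤ ‖Qt p1'‖ * ‖p1'‖ := real_inner_le_norm _ _
      have hb2 : ν * ‖p1'‖ ≤ ‖Qt p1'‖ := hνQ p1' hp1'
      nlinarith [norm_nonneg (Qt p1'), norm_nonneg p1', hQtpos p1']
    have hcs : ⟪Bd, v⟫ ^ 2 ≤ ⟪Qt p, p⟫ * ⟪Qt v, v⟫ := by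
      rw [← hQtp]; exact cs_psd Qt hQtsym hQtpos p v
    have hBb : ‖Bd‖ ^ 2 ≤ β * ⟪Bd, M a⟫ := by
      rw [hMa, hBd]; exact hB (x k) (x (k + 1))
    have hs : 0 ≤ ⟪Qt v, v⟫ := hQtpos v
    rw [← hQtv]
    rcases eq_or_lt_of_le hβ with hb0 | hb0
    · have hB0 : ‖Bd‖ ^ 2 ≤ 0 := by rw [← hb0] at hBb; linarith
      have hBd0 : Bd = 0 := by
        have h3 := sq_nonneg ‖Bd‖
        have h4 : ‖Bd‖ = 0 := by nlinarith
        exact norm_eq_zero.mp h4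
      rw [hBd0, inner_zero_left, inner_zero_left, ← hb0]
      simp
    · have hP : 0 ≤ ⟪Bd, M a⟫ := by nlinarith [sq_nonneg ‖Bd‖]
      have hR : 0 ≤ β / (4 * ν) * ⟪Qt v, v⟫ := by positivity
      have hQtpp : 0 ≤ ⟪Qt p, p⟫ := hQtpos p
      have ht2 : ⟪Bd, v⟫ ^ 2 ≤ 4 * ⟪Bd, M a⟫ * (β / (4 * ν) * ⟪Qt v, v⟫) := by
        have e : 4 * ⟪Bd, M a⟫ * (β / (4 * ν) * ⟪Qt v, v⟫)
            = (β * ⟪Bd, M a⟫ * ⟪Qt v, v⟫) / ν := by field_simp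
        rw [e, le_div_iff₀ hν]
        nlinarith [mul_le_mul_of_nonneg_right hcs hν.le]
      nlinarith [sq_nonneg (⟪Bd, M a⟫ - β / (4 * ν) * ⟪Qt v, v⟫), hP, hR, ht2]
  -- conclude
  rw [hSd, hSd', hGv]
  linarith [hMono, hcoco, hexp1, hexp2]
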